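/- Let K = [[P, Q],[Qᵀ, R]] be symmetric positive semidefinite and let 0 ≤ ζ ≤ 1. Then P − Q R⁺ Qᵀ ⪰ ζ P if and only if R − Qᵀ P⁺ Q ⪰ ζ R, where ⪰ denotes the Loewner order and M⁺ the Moore–Penrose pseudoinverse. -/

import Mathlib

open Matrix

/-- `Mplus` is the Moore–Penrose pseudoinverse of `M`. -/
def IsMoorePenrose {a b : Type*} [Fintype a] [Fintype b]
    (M : Matrix a b ℝ) (Mplus : Matrix b a ℝ) : Prop :=
  M * Mplus * M = M ∧ Mplus * M * Mplus = Mplus ∧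
    (M * Mplus)ᵀ = M * Mplus ∧ (Mplus * M)ᵀ = Mplus * M

section aux
set_option linter.unusedSectionVars false
variable {m n : Type*} [Fintype m] [Fintype n]

private lemma mp_unique (M : Matrix m n ℝ) (X Y : Matrix n m ℝ)
    (hX : IsMoorePenrose M X) (hY : IsMoorePenrose M Y) : X = Y := by
  obtain ⟨hX1, hX2, hX3, hX4⟩ := hX
  obtain ⟨hY1, hY2, hY3, hY4⟩ := hY
  have h2 : Mᵀ = Mᵀ * (Yᵀ * Mᵀ) := by
    conv_lhs => rw [← hY1]
    rw [transpose_mul, transpose_mul]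
  have hMX : M * X = M * Y := by
    calc M * X = Xᵀ * Mᵀ := by rw [← transpose_mul, hX3]
    _ = Xᵀ * (Mᵀ * (Yᵀ * Mᵀ)) := by rw [← h2]
    _ = (Xᵀ * Mᵀ) * (Yᵀ * Mᵀ) := by simp only [Matrix.mul_assoc]
    _ = (M * X) * (M * Y) := by rw [← transpose_mul, ← transpose_mul, hX3, hY3]
    _ = (M * X * M) * Y := by simp only [Matrix.mul_assoc]
    _ = M * Y := by rw [hX1]
  have hXM : X * M = Y * M := by
    calc X * M = Mᵀ * Xᵀ := by rw [← transpose_mul, hX4]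
    _ = (Mᵀ * (Yᵀ * Mᵀ)) * Xᵀ := by rw [← h2]
    _ = (Mᵀ * Yᵀ) * (Mᵀ * Xᵀ) := by simp only [Matrix.mul_assoc]
    _ = (Y * M) * (X * M) := by rw [← transpose_mul, ← transpose_mul, hX4, hY4]
    _ = Y * (M * X * M) := by simp only [Matrix.mul_assoc]
    _ = Y * M := by rw [hX1]
  calc X = X * M * X := hX2.symm
  _ = X * M * Y := by rw [Matrix.mul_assoc, hMX, ← Matrix.mul_assoc]
  _ = Y * M * Y := by rw [hXM]
  _ = Y := hY2

private lemma mp_symm (M X : Matrix m m ℝ) (hM : Mᵀ = M)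
    (h : IsMoorePenrose M X) : Xᵀ = X := by
  obtain ⟨h1, h2, h3, h4⟩ := h
  refine mp_unique M Xᵀ X ⟨?_, ?_, ?_, ?_⟩ ⟨h1, h2, h3, h4⟩
  · have e1 : Mᵀ * Xᵀ * Mᵀ = Mᵀ := by
      rw [← transpose_mul, ← transpose_mul, ← Matrix.mul_assoc, h1]
    rwa [hM] at e1
  · have e2 : Xᵀ * Mᵀ * Xᵀ = Xᵀ := by
      rw [← transpose_mul, ← transpose_mul, ← Matrix.mul_assoc, h2]
    rwa [hM] at e2
  · rw [transpose_mul, transpose_transpose, hM]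
    conv_rhs => rw [← hM]
    rw [← transpose_mul, h4]
  · rw [transpose_mul, transpose_transpose, hM]
    conv_rhs => rw [← hM]
    rw [← transpose_mul, h3]

private lemma dot_transfer (M : Matrix m n ℝ) (x : m → ℝ) (y : n → ℝ) :
    x ⬝ᵥ (M *ᵥ y) = y ⬝ᵥ (Mᵀ *ᵥ x) := by
  rw [dotProduct_mulVec, mulVec_transpose, dotProduct_comm]

private lemma psd_ker {P : Matrix m m ℝ} {Q : Matrix m n ℝ} {R : Matrix n n ℝ}
    (hK : (fromBlocks P Q Qᵀ R).PosSemidef) (y : n → ℝ) (hy : R *ᵥ y = 0) :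
    Q *ᵥ y = 0 := by
  set x := Q *ᵥ y with hx
  rw [← dotProduct_self_eq_zero (v := x)]
  have key : ∀ t : ℝ, 0 ≤ (x ⬝ᵥ P *ᵥ x) * (t * t) + (2 * (x ⬝ᵥ x)) * t + 0 := by
    intro t
    have h := hK.dotProduct_mulVec_nonneg (Sum.elim (t • x) y)
    simp only [star_trivial, fromBlocks_mulVec, sumElim_dotProduct_sumElim,
      Sum.elim_comp_inl, Sum.elim_comp_inr, mulVec_smul, hy, add_zero,
      dotProduct_add, dotProduct_smul, smul_dotProduct, dotProduct_zero,
      smul_eq_mul, smul_smul] at h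
    have ht : y ⬝ᵥ Qᵀ *ᵥ x = x ⬝ᵥ Q *ᵥ y := (dot_transfer Q x y).symm
    have hxx : x ⬝ᵥ Q *ᵥ y = x ⬝ᵥ x := by rw [← hx]
    rw [ht, hxx] at h
    ring_nf
    ring_nf at h
    linarith
  have hd := discrim_le_zero key
  rw [discrim] at hd
  nlinarith [hd]

private lemma mulVec_all_zero {M : Matrix m n ℝ} [DecidableEq n]
    (h : ∀ v, M *ᵥ v = 0) : M = 0 := by
  ext i j
  have := congrFun (h (Pi.single j 1)) i
  simpa [mulVec_single] using this

private lemma range_fact {P : Matrix m m ℝ} {Q : Matrix m n ℝ} {R : Matrix n n ℝ}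
    {Rplus : Matrix n n ℝ} [DecidableEq n]
    (hK : (fromBlocks P Q Qᵀ R).PosSemidef)
    (hR : R * Rplus * R = R) : Q * (Rplus * R) = Q := by
  have hz : Q * (1 - Rplus * R) = 0 := by
    apply mulVec_all_zero
    intro v
    rw [← mulVec_mulVec]
    apply psd_ker hK
    rw [mulVec_mulVec]
    have hzero : R * (1 - Rplus * R) = 0 := by
      rw [Matrix.mul_sub, Matrix.mul_one, ← Matrix.mul_assoc, hR, sub_self]
    rw [hzero, Matrix.zero_mulVec]
  rwa [Matrix.mul_sub, Matrix.mul_one, sub_eq_zero, eq_comm] at hz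

private lemma psd_cs {S : Matrix m m ℝ} (hS : S.PosSemidef) (u v : m → ℝ) :
    (u ⬝ᵥ S *ᵥ v) ^ 2 ≤ (u ⬝ᵥ S *ᵥ u) * (v ⬝ᵥ S *ᵥ v) := by
  have key : ∀ t : ℝ, 0 ≤ (v ⬝ᵥ S *ᵥ v) * (t * t) + (2 * (u ⬝ᵥ S *ᵥ v)) * t
      + (u ⬝ᵥ S *ᵥ u) := by
    intro t
    have h := hS.dotProduct_mulVec_nonneg (u + t • v)
    have hsym : v ⬝ᵥ S *ᵥ u = u ⬝ᵥ S *ᵥ v := by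
      rw [dot_transfer S v u, (conjTranspose_eq_transpose_of_trivial S ▸ hS.1 : Sᵀ = S)]
    simp only [star_trivial, mulVec_add, mulVec_smul, dotProduct_add,
      add_dotProduct, smul_dotProduct, dotProduct_smul, smul_eq_mul,
      smul_smul] at h
    rw [hsym] at h
    ring_nf
    ring_nf at h
    linarith
  have hd := discrim_le_zero key
  rw [discrim] at hd
  nlinarith [hd]

private lemma quad_sandwich (B : Matrix n m ℝ) (S : Matrix n n ℝ) (x : m → ℝ) :
    x ⬝ᵥ ((Bᵀ * S * B) *ᵥ x) = (B *ᵥ x) ⬝ᵥ S *ᵥ (B *ᵥ x) := by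
  rw [Matrix.mul_assoc, ← mulVec_mulVec, ← mulVec_mulVec, dot_transfer,
    transpose_transpose, dotProduct_comm]

private lemma half (P : Matrix m m ℝ) (Q : Matrix m n ℝ) (R Rplus : Matrix n n ℝ)
    (hP : P.PosSemidef) (hR : R.PosSemidef) (hmp : IsMoorePenrose R Rplus)
    (hQ : Q * (Rplus * R) = Q) (ζ : ℝ) (hζ1 : ζ ≤ 1) :
    ((P - Q * Rplus * Qᵀ) - ζ • P).PosSemidef ↔
      ∀ x y, (x ⬝ᵥ Q *ᵥ y) ^ 2 ≤ (1 - ζ) * (x ⬝ᵥ P *ᵥ x) * (y ⬝ᵥ R *ᵥ y) := by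
  have hPsym : Pᵀ = P := conjTranspose_eq_transpose_of_trivial P ▸ hP.1
  have hRsym : Rᵀ = R := conjTranspose_eq_transpose_of_trivial R ▸ hR.1
  have hRp : Rplusᵀ = Rplus := mp_symm R Rplus hRsym hmp
  have hQRQ : Q * Rplus * Qᵀ = (Rplus * Qᵀ)ᵀ * R * (Rplus * Qᵀ) := by
    rw [transpose_mul, hRp, transpose_transpose]
    conv_lhs => rw [← hmp.2.1]
    simp only [Matrix.mul_assoc]
  have hc : ∀ x, x ⬝ᵥ (Q * Rplus * Qᵀ) *ᵥ x
      = ((Rplus * Qᵀ) *ᵥ x) ⬝ᵥ R *ᵥ ((Rplus * Qᵀ) *ᵥ x) := by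
    intro x
    rw [hQRQ, quad_sandwich]
  have hform : ∀ x, x ⬝ᵥ ((P - Q * Rplus * Qᵀ) - ζ • P) *ᵥ x
      = x ⬝ᵥ P *ᵥ x - x ⬝ᵥ (Q * Rplus * Qᵀ) *ᵥ x - ζ * (x ⬝ᵥ P *ᵥ x) := by
    intro x
    simp [Matrix.sub_mulVec, smul_mulVec, dotProduct_sub, dotProduct_smul]
  have hHerm : ((P - Q * Rplus * Qᵀ) - ζ • P).IsHermitian := by
    have hs : (Q * Rplus * Qᵀ)ᵀ = Q * Rplus * Qᵀ := by
      rw [transpose_mul, transpose_mul, transpose_transpose, hRp, Matrix.mul_assoc]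
    rw [IsHermitian, conjTranspose_eq_transpose_of_trivial, transpose_sub,
      transpose_sub, transpose_smul, hPsym, hs]
  have hxy : ∀ (x : m → ℝ) (y : n → ℝ),
      x ⬝ᵥ Q *ᵥ y = ((Rplus * Qᵀ) *ᵥ x) ⬝ᵥ R *ᵥ y := by
    intro x y
    conv_lhs => rw [← hQ]
    rw [← Matrix.mul_assoc, ← mulVec_mulVec, dot_transfer, transpose_mul, hRp,
      dotProduct_comm]
  constructor
  · intro h x y
    have h1 : 0 ≤ x ⬝ᵥ P *ᵥ x - x ⬝ᵥ (Q * Rplus * Qᵀ) *ᵥ x - ζ * (x ⬝ᵥ P *ᵥ x) := by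
      have := h.dotProduct_mulVec_nonneg x
      rw [star_trivial, hform x] at this
      exact this
    have hcs := psd_cs hR ((Rplus * Qᵀ) *ᵥ x) y
    have hy0 : 0 ≤ y ⬝ᵥ R *ᵥ y := by simpa using hR.dotProduct_mulVec_nonneg y
    rw [hxy x y]
    rw [hc x] at h1
    nlinarith [hcs, hy0, h1]
  · intro h
    refine PosSemidef.of_dotProduct_mulVec_nonneg hHerm (fun x => ?_)
    rw [star_trivial, hform x]
    set w := (Rplus * Qᵀ) *ᵥ x with hw
    have hcx : x ⬝ᵥ (Q * Rplus * Qᵀ) *ᵥ x = w ⬝ᵥ R *ᵥ w := hc x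
    have hxw : x ⬝ᵥ Q *ᵥ w = w ⬝ᵥ R *ᵥ w := by
      rw [hw, mulVec_mulVec, ← Matrix.mul_assoc, ← hc x]
    have hineq := h x w
    rw [hxw] at hineq
    have hc0 : 0 ≤ w ⬝ᵥ R *ᵥ w := by simpa using hR.dotProduct_mulVec_nonneg w
    have hPx : 0 ≤ x ⬝ᵥ P *ᵥ x := by simpa using hP.dotProduct_mulVec_nonneg x
    have hK0 : 0 ≤ (1 - ζ) * (x ⬝ᵥ P *ᵥ x) := by nlinarith
    rw [hcx]
    nlinarith [hineq, hc0, hK0]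

end aux

/-- For a PSD block matrix `K = [[P, Q],[Qᵀ, R]]` and `0 ≤ ζ ≤ 1`,
`P − Q R⁺ Qᵀ ⪰ ζ P` iff `R − Qᵀ P⁺ Q ⪰ ζ R`. -/
theorem schur_complement_loewner_iff {a b : ℕ}
    (P : Matrix (Fin a) (Fin a) ℝ) (Q : Matrix (Fin a) (Fin b) ℝ)
    (R : Matrix (Fin b) (Fin b) ℝ)
    (Pplus : Matrix (Fin a) (Fin a) ℝ) (Rplus : Matrix (Fin b) (Fin b) ℝ)
    (hK : (Matrix.fromBlocks P Q Qᵀ R).PosSemidef)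
    (hP : IsMoorePenrose P Pplus) (hR : IsMoorePenrose R Rplus)
    (ζ : ℝ) (hζ0 : 0 ≤ ζ) (hζ1 : ζ ≤ 1) :
    ((P - Q * Rplus * Qᵀ) - ζ • P).PosSemidef ↔
      ((R - Qᵀ * Pplus * Q) - ζ • R).PosSemidef := by
  have hPp : P.PosSemidef := by
    have h := hK.submatrix (Sum.inl : Fin a → Fin a ⊕ Fin b)
    have e : (fromBlocks P Q Qᵀ R).submatrix (Sum.inl : Fin a → Fin a ⊕ Fin b)
        Sum.inl = P := by
      ext i j; simp [fromBlocks]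
    rwa [e] at h
  have hRpsd : R.PosSemidef := by
    have h := hK.submatrix (Sum.inr : Fin b → Fin a ⊕ Fin b)
    have e : (fromBlocks P Q Qᵀ R).submatrix (Sum.inr : Fin b → Fin a ⊕ Fin b)
        Sum.inr = R := by
      ext i j; simp [fromBlocks]
    rwa [e] at h
  have hswap : (fromBlocks R Qᵀ (Qᵀᵀ) P).PosSemidef := by
    have h := hK.submatrix (Sum.swap : Fin b ⊕ Fin a → Fin a ⊕ Fin b)
    rw [fromBlocks_submatrix_sum_swap_sum_swap] at h
    rwa [transpose_transpose]
  have hQ1 : Q * (Rplus * R) = Q := range_fact hK hR.1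
  have hQ2 : Qᵀ * (Pplus * P) = Qᵀ := range_fact hswap hP.1
  have iff1 := half P Q R Rplus hPp hRpsd hR hQ1 ζ hζ1
  have iff2 := half R Qᵀ P Pplus hRpsd hPp hP hQ2 ζ hζ1
  rw [transpose_transpose] at iff2
  rw [iff1, iff2]
  constructor
  · intro h y x
    have := h x y
    rw [dot_transfer Q x y] at this
    nlinarith [this]
  · intro h x y
    have := h y x
    rw [← dot_transfer Q x y] at this
    nlinarith [this]
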